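/- Estimate (10): Let 1 < p ≤ 2 with conjugate exponent p', and let f ∈ L^p_A(ℝ₊) on the Jacobi hypergroup. Then there exists a positive constant c such that for every δ > 0, δ² (∫₀^{1/δ} x^{2p'} |𝓕(f)(x)|^{p'} dx/|c(x)|²)^{1/p'} ≤ c ω_{A,p}(f)(δ). -/

import Mathlib

open MeasureTheory Set Filter

/-- The `L^p` norm on `(0,∞)` with respect to the weighted measure `w(x) dx`. -/
noncomputable def wLpNorm (w : ℝ → ℝ) (p : ℝ) (f : ℝ → ℂ) : ℝ :=
  (∫ x in Set.Ioi (0 : ℝ), ‖f x‖ ^ p * w x) ^ (1 / p)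

/-- Membership in `L^p((0,∞), w(x) dx)`. -/
def MemW (w : ℝ → ℝ) (p : ℝ) (f : ℝ → ℂ) : Prop :=
  AEMeasurable f (volume.restrict (Set.Ioi (0 : ℝ))) ∧
    IntegrableOn (fun x => ‖f x‖ ^ p * w x) (Set.Ioi (0 : ℝ))

/-- The Jacobi hypergroup setting: the Chébli–Trimèche hypergroup `(ℝ₊, ∗(A))` with
`A(x) = 2^(2ρ) (sinh x)^(2α+1) (cosh x)^(2β+1)`, `α ≥ β ≥ -1/2`, `α ≠ -1/2`,
`ρ = α + β + 1`.  Its characters are the Jacobi functions `φ_λ`, satisfying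
`|1 - φ_λ(t)| ≥ c₀ min{1, (λt)²}`.  The density `cden = |c(λ)|⁻²` is even, continuous
and comparable to `|λ|^(2α+1)` for `|λ| > k` and to `|λ|²` for `|λ| ≤ k`.  The
generalized Fourier transform `FT` is given on `L¹_A` by
`𝓕(f)(λ) = ∫₀^∞ f(x) φ_λ(x) A(x) dx`; it satisfies `‖𝓕 f‖_∞ ≤ ‖f‖_{A,1}`, the
Hausdorff–Young inequality, the Hardy–Littlewood inequality of Lemma 1 and the
translation identity `𝓕(τ_δ f)(λ) = φ_λ(δ) 𝓕(f)(λ)`, where the generalized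
translations `τ_δ` are `L^p_A`-contractions. -/
structure JacobiHypergroup where
  α : ℝ
  β : ℝ
  ρ : ℝ
  hβα : β ≤ α
  hβ : -(1/2) ≤ β
  hα : α ≠ -(1/2)
  hρ : ρ = α + β + 1
  /-- the weight function `A` of the Jacobi hypergroup -/
  A : ℝ → ℝ
  hA : ∀ x : ℝ, 0 ≤ x →
    A x = (2 : ℝ) ^ (2 * ρ) * Real.sinh x ^ (2 * α + 1) * Real.cosh x ^ (2 * β + 1)
  /-- the Jacobi functions `φ_λ`, the characters of the hypergroup -/
  φ : ℝ → ℝ → ℂ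
  c₀ : ℝ
  hc₀ : 0 < c₀
  hφ_lower : ∀ lam t : ℝ, 0 < t →
    c₀ * min 1 ((lam * t) ^ 2) ≤ ‖1 - φ lam t‖
  /-- the density `|c(λ)|⁻²` of the Plancherel measure -/
  cden : ℝ → ℝ
  hcden_cont : Continuous cden
  hcden_even : ∀ x : ℝ, cden (-x) = cden x
  k : ℝ
  k₁ : ℝ
  k₂ : ℝ
  hk : 0 < k
  hk₁ : 0 < k₁
  hk₂ : 0 < k₂
  hcden_hi : ∀ x : ℝ, k < |x| →
    k₁ * |x| ^ (2 * α + 1) ≤ cden x ∧ cden x ≤ k₂ * |x| ^ (2 * α + 1)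
  hcden_lo : ∀ x : ℝ, |x| ≤ k →
    k₁ * |x| ^ (2 : ℝ) ≤ cden x ∧ cden x ≤ k₂ * |x| ^ (2 : ℝ)
  /-- the generalized Fourier transform -/
  FT : (ℝ → ℂ) → ℝ → ℂ
  hFT_def : ∀ f : ℝ → ℂ, MemW A 1 f → ∀ lam : ℝ,
    FT f lam = ∫ x in Set.Ioi (0 : ℝ), f x * φ lam x * (A x : ℂ)
  hFT_meas : ∀ f : ℝ → ℂ, Measurable (FT f)
  hFT_sub : ∀ f g : ℝ → ℂ, ∀ lam : ℝ,
    FT (fun y => f y - g y) lam = FT f lam - FT g lam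
  /-- `‖𝓕 f‖_∞ ≤ ‖f‖_{A,1}` -/
  hFT_sup : ∀ f : ℝ → ℂ, MemW A 1 f → ∀ lam : ℝ,
    ‖FT f lam‖ ≤ wLpNorm A 1 f
  /-- the Hausdorff–Young inequality `‖𝓕 f‖_{c,p'} ≤ C ‖f‖_{A,p}` -/
  hHY : ∀ p p' : ℝ, 1 < p → p ≤ 2 → 1 / p + 1 / p' = 1 →
    ∃ C > (0 : ℝ), ∀ f : ℝ → ℂ, MemW A p f →
      (∫⁻ lam in Set.Ioi (0 : ℝ),
          ENNReal.ofReal (‖FT f lam‖ ^ p' * cden lam)) ^ (1 / p')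
        ≤ ENNReal.ofReal (C * wLpNorm A p f)
  /-- the Hardy–Littlewood inequality of Lemma 1 (with the piecewise weight
  `g(t) = t³` for `t ≤ k`, `g(t) = t^(2(α+1))` for `t > k`) -/
  hHL : ∀ p : ℝ, 1 < p → p ≤ 2 →
    ∃ C > (0 : ℝ), ∀ f : ℝ → ℂ, MemW A p f →
      ∫⁻ x in Set.Ioi (0 : ℝ),
          ENNReal.ofReal ((if x ≤ k then x ^ (3 : ℝ) else x ^ (2 * (α + 1))) ^ (p - 2) *
            ‖FT f x‖ ^ p * cden x)
        ≤ ENNReal.ofReal (C * wLpNorm A p f ^ p)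
  /-- the generalized translation operators -/
  τ : ℝ → (ℝ → ℂ) → ℝ → ℂ
  hτ_contract : ∀ p : ℝ, 1 ≤ p → ∀ (δ : ℝ) (f : ℝ → ℂ), MemW A p f →
    MemW A p (τ δ f) ∧ wLpNorm A p (τ δ f) ≤ wLpNorm A p f
  hτ_diff : ∀ p : ℝ, 1 ≤ p → ∀ (δ : ℝ) (f : ℝ → ℂ), MemW A p f →
    MemW A p (fun y => τ δ f y - f y)
  /-- the translation identity `𝓕(τ_δ f)(λ) = φ_λ(δ) 𝓕(f)(λ)` -/
  hτ_FT : ∀ p : ℝ, 1 ≤ p → p ≤ 2 → ∀ (δ : ℝ) (f : ℝ → ℂ), MemW A p f →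
    ∀ᵐ lam ∂(volume.restrict (Set.Ioi (0 : ℝ))),
      FT (τ δ f) lam = φ lam δ * FT f lam

/-- The modulus of continuity of first order, `ω_{A,p}(f)(δ) = ‖τ_δ f - f‖_{A,p}`. -/
noncomputable def JacobiHypergroup.omega (S : JacobiHypergroup) (p : ℝ)
    (f : ℝ → ℂ) (δ : ℝ) : ℝ :=
  wLpNorm S.A p (fun y => S.τ δ f y - f y)

/-- **Estimate (10)**: for `1 < p ≤ 2` with conjugate exponent `p'` and
`f ∈ L^p_A(ℝ₊)` on the Jacobi hypergroup, there exists `c > 0` such that for every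
`δ > 0`,
`δ² (∫₀^{1/δ} x^(2p') |𝓕(f)(x)|^(p') dx/|c(x)|²)^(1/p') ≤ c ω_{A,p}(f)(δ)`. -/
theorem estimate_ten (S : JacobiHypergroup) (p p' : ℝ) (hp : 1 < p) (hp2 : p ≤ 2)
    (hpp' : 1 / p + 1 / p' = 1) (f : ℝ → ℂ) (hf : MemW S.A p f) :
    ∃ c > (0 : ℝ), ∀ δ > (0 : ℝ),
      ENNReal.ofReal (δ ^ 2) *
          (∫⁻ x in Set.Ioo (0 : ℝ) (1 / δ),
            ENNReal.ofReal (x ^ (2 * p') *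
              ‖S.FT f x‖ ^ p' * S.cden x)) ^ (1 / p')
        ≤ ENNReal.ofReal (c * S.omega p f δ) := by
  obtain ⟨C, hC, hHY⟩ := S.hHY p p' hp hp2 hpp'
  have hc0 := S.hc₀
  have hp0 : (0:ℝ) < p := lt_trans one_pos hp
  have h1p : 1/p < 1 := by rw [div_lt_one hp0]; exact hp
  have hp'inv : (0:ℝ) < 1/p' := by linarith
  have hp'pos : (0:ℝ) < p' := one_div_pos.mp hp'inv
  have hcden_nonneg : ∀ x : ℝ, 0 ≤ S.cden x := by
    intro x
    rcases le_or_gt (|x|) S.k with h | h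
    · have h1 := (S.hcden_lo x h).1
      have h2 : (0:ℝ) ≤ S.k₁ * |x| ^ (2:ℝ) :=
        mul_nonneg S.hk₁.le (Real.rpow_nonneg (abs_nonneg x) _)
      linarith
    · have h1 := (S.hcden_hi x h).1
      have h2 : (0:ℝ) ≤ S.k₁ * |x| ^ (2*S.α+1) :=
        mul_nonneg S.hk₁.le (Real.rpow_nonneg (abs_nonneg x) _)
      linarith
  refine ⟨C / S.c₀, by positivity, ?_⟩
  intro δ hδ
  set g : ℝ → ℂ := fun y => S.τ δ f y - f y with hgdef
  have hg : MemW S.A p g := S.hτ_diff p hp.le δ f hf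
  set K : ℝ := ((S.c₀ * δ^2)⁻¹) ^ p' with hKdef
  have hKpos : 0 < K := by positivity
  have hae := S.hτ_FT p hp.le hp2 δ f hf
  have haeIoo : ∀ᵐ x ∂(volume.restrict (Set.Ioo (0:ℝ) (1/δ))),
      x ^ (2*p') * ‖S.FT f x‖ ^ p' * S.cden x
        ≤ K * (‖S.FT g x‖ ^ p' * S.cden x) := by
    have hsub : Set.Ioo (0:ℝ) (1/δ) ⊆ Set.Ioi 0 := fun x hx => hx.1
    filter_upwards [ae_restrict_of_ae_restrict_of_subset hsub hae,
      ae_restrict_mem measurableSet_Ioo] with x heq hx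
    obtain ⟨hx0, hx1⟩ := hx
    set a := ‖S.FT f x‖ with hadef
    set b := ‖S.FT g x‖ with hbdef
    have hb : b = ‖1 - S.φ x δ‖ * a := by
      have hsubFT : S.FT g x = S.FT (S.τ δ f) x - S.FT f x := S.hFT_sub _ _ x
      have e : S.φ x δ * S.FT f x - S.FT f x = (S.φ x δ - 1) * S.FT f x := by ring
      rw [hbdef, hsubFT, heq, e, norm_mul]
      congr 1
      exact norm_sub_rev _ _
    have hxδ : x * δ < 1 := (lt_div_iff₀ hδ).mp hx1
    have hmin : min 1 ((x*δ)^2) = (x*δ)^2 := by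
      apply min_eq_right
      nlinarith [mul_pos hx0 hδ]
    have hφ := S.hφ_lower x δ hδ
    rw [hmin] at hφ
    have h1 : S.c₀ * (x*δ)^2 * a ≤ b := by
      rw [hb]
      exact mul_le_mul_of_nonneg_right hφ (norm_nonneg _)
    have h2 : x^2 * a ≤ (S.c₀ * δ^2)⁻¹ * b := by
      rw [inv_mul_eq_div, le_div_iff₀ (by positivity : (0:ℝ) < S.c₀ * δ^2)]
      calc x^2 * a * (S.c₀ * δ^2) = S.c₀ * (x*δ)^2 * a := by ring
        _ ≤ b := h1
    have h3 : (x^2*a)^p' ≤ ((S.c₀*δ^2)⁻¹ * b)^p' :=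
      Real.rpow_le_rpow (by positivity) h2 hp'pos.le
    have e1 : (x^2*a)^p' = x^(2*p') * a^p' := by
      rw [Real.mul_rpow (by positivity) (norm_nonneg _)]
      congr 1
      rw [← Real.rpow_natCast x 2, ← Real.rpow_mul hx0.le]
      norm_num
    have e2 : ((S.c₀*δ^2)⁻¹ * b)^p' = K * b^p' :=
      Real.mul_rpow (by positivity) (norm_nonneg _)
    rw [e1, e2] at h3
    calc x^(2*p') * a^p' * S.cden x ≤ K * b^p' * S.cden x :=
          mul_le_mul_of_nonneg_right h3 (hcden_nonneg x)
      _ = K * (b^p' * S.cden x) := by ring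
  have hmain :
      (∫⁻ x in Set.Ioo (0:ℝ) (1/δ),
          ENNReal.ofReal (x^(2*p') * ‖S.FT f x‖^p' * S.cden x))
        ≤ ENNReal.ofReal K *
            ∫⁻ x in Set.Ioi (0:ℝ),
              ENNReal.ofReal (‖S.FT g x‖^p' * S.cden x) := by
    calc (∫⁻ x in Set.Ioo (0:ℝ) (1/δ),
            ENNReal.ofReal (x^(2*p') * ‖S.FT f x‖^p' * S.cden x))
        ≤ ∫⁻ x in Set.Ioo (0:ℝ) (1/δ),
            ENNReal.ofReal (K * (‖S.FT g x‖^p' * S.cden x)) :=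
          lintegral_mono_ae (haeIoo.mono fun x h => ENNReal.ofReal_le_ofReal h)
      _ = ENNReal.ofReal K * ∫⁻ x in Set.Ioo (0:ℝ) (1/δ),
            ENNReal.ofReal (‖S.FT g x‖^p' * S.cden x) := by
          simp_rw [ENNReal.ofReal_mul hKpos.le]
          exact lintegral_const_mul' _ _ ENNReal.ofReal_ne_top
      _ ≤ _ := mul_le_mul_right (lintegral_mono_set (fun x hx => hx.1)) _
  have hHYg := hHY g hg
  have hK' : (ENNReal.ofReal K) ^ (1/p') = ENNReal.ofReal ((S.c₀*δ^2)⁻¹) := by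
    rw [ENNReal.ofReal_rpow_of_pos hKpos]
    congr 1
    rw [hKdef, ← Real.rpow_mul (by positivity), mul_one_div, div_self hp'pos.ne',
      Real.rpow_one]
  calc ENNReal.ofReal (δ ^ 2) *
        (∫⁻ x in Set.Ioo (0 : ℝ) (1 / δ),
          ENNReal.ofReal (x ^ (2 * p') *
            ‖S.FT f x‖ ^ p' * S.cden x)) ^ (1 / p')
      ≤ ENNReal.ofReal (δ ^ 2) *
          (ENNReal.ofReal K *
            ∫⁻ x in Set.Ioi (0:ℝ),
              ENNReal.ofReal (‖S.FT g x‖^p' * S.cden x)) ^ (1/p') :=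
        mul_le_mul_right (ENNReal.rpow_le_rpow hmain hp'inv.le) _
    _ = ENNReal.ofReal (δ ^ 2) *
          ((ENNReal.ofReal K) ^ (1/p') *
            (∫⁻ x in Set.Ioi (0:ℝ),
              ENNReal.ofReal (‖S.FT g x‖^p' * S.cden x)) ^ (1/p')) := by
        rw [ENNReal.mul_rpow_of_nonneg _ _ hp'inv.le]
    _ ≤ ENNReal.ofReal (δ ^ 2) *
          (ENNReal.ofReal ((S.c₀*δ^2)⁻¹) *
            ENNReal.ofReal (C * wLpNorm S.A p g)) := by
        rw [hK']
        exact mul_le_mul_right (mul_le_mul_right hHYg _) _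
    _ = ENNReal.ofReal (δ^2 * ((S.c₀*δ^2)⁻¹ * (C * wLpNorm S.A p g))) := by
        rw [← ENNReal.ofReal_mul (by positivity : (0:ℝ) ≤ (S.c₀*δ^2)⁻¹),
          ← ENNReal.ofReal_mul (by positivity : (0:ℝ) ≤ δ^2)]
    _ = ENNReal.ofReal (C / S.c₀ * S.omega p f δ) := by
        congr 1
        have homega : S.omega p f δ = wLpNorm S.A p g := rfl
        rw [homega]
        field_simp
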